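/- Let ξ₁, ..., ξ_m be independent centered real random variables such that 𝔼|ξ_i|³ ≤ M·(𝔼ξ_i²)^{3/2} for all i, for some M > 0, and let S = ξ₁ + ⋯ + ξ_m. Then there is a constant C = C(M) such that for every t ≥ (1/8)·max_i √(𝔼ξ_i²), the Lévy concentration function satisfies Q_S(t) := sup_{a∈ℝ} P(|S - a| ≤ t) ≤ C·t / √(Σ_{i=1}^m 𝔼ξ_i²). -/

import Mathlib

open MeasureTheory ProbabilityTheory
open Complex (I)

private lemma hderexp (x : ℝ) :
    HasDerivAt (fun y : ℝ => Complex.exp (y * I)) (Complex.exp (x * I) * I) x := by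
  have h1 : HasDerivAt (fun z : ℂ => Complex.exp (z * I)) (Complex.exp (x * I) * I) (x : ℂ) := by
    simpa [Function.comp_def] using (Complex.hasDerivAt_exp ((x : ℂ) * I)).comp (x : ℂ)
      ((hasDerivAt_id (x : ℂ)).mul_const I)
  exact h1.comp_ofReal

private lemma hderlin (y : ℝ) : HasDerivAt (fun y : ℝ => (y : ℂ) * I) I y := by
  simpa using (Complex.ofRealCLM.hasDerivAt (x := y)).mul_const I

private lemma uIcc_abs_le {x y : ℝ} (hy : y ∈ Set.uIcc 0 x) : |y| ≤ |x| := by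
  rcases le_total 0 x with h | h
  · rw [Set.uIcc_of_le h] at hy
    rw [_root_.abs_of_nonneg hy.1, _root_.abs_of_nonneg h]; exact hy.2
  · rw [Set.uIcc_of_ge h] at hy
    rw [_root_.abs_of_nonpos hy.2, _root_.abs_of_nonpos h]; linarith [hy.1]

private lemma exp_taylor1 (x : ℝ) : ‖Complex.exp (x * I) - 1‖ ≤ |x| := by
  have := Convex.norm_image_sub_le_of_norm_hasDerivWithin_le
    (f := fun y : ℝ => Complex.exp (y * I)) (f' := fun y : ℝ => Complex.exp (y * I) * I)
    (s := Set.uIcc 0 x) (C := 1)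
    (fun y _ => (hderexp y).hasDerivWithinAt)
    (fun y _ => by simp [Complex.norm_exp_ofReal_mul_I])
    (convex_uIcc 0 x) Set.left_mem_uIcc Set.right_mem_uIcc
  simpa using this

private lemma exp_taylor2 (x : ℝ) : ‖Complex.exp (x * I) - 1 - x * I‖ ≤ x ^ 2 := by
  have := Convex.norm_image_sub_le_of_norm_hasDerivWithin_le
    (f := fun y : ℝ => Complex.exp (y * I) - 1 - y * I)
    (f' := fun y : ℝ => Complex.exp (y * I) * I - I)
    (s := Set.uIcc 0 x) (C := |x|)
    (fun y _ => by
      simpa using (((hderexp y).sub_const 1).fun_sub (hderlin y)).hasDerivWithinAt)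
    (fun y hy => by
      show ‖Complex.exp (y * I) * I - I‖ ≤ |x|
      have he : Complex.exp (y * I) * I - I = (Complex.exp (y * I) - 1) * I := by ring
      rw [he, norm_mul]
      simpa using (exp_taylor1 y).trans (uIcc_abs_le hy))
    (convex_uIcc 0 x) Set.left_mem_uIcc Set.right_mem_uIcc
  calc ‖Complex.exp (x * I) - 1 - x * I‖
      ≤ |x| * ‖(x : ℝ) - 0‖ := by simpa using this
    _ = x ^ 2 := by rw [sub_zero, Real.norm_eq_abs, ← abs_mul, ← sq, abs_sq]

private lemma exp_taylor3 (x : ℝ) :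
    ‖Complex.exp (x * I) - 1 - x * I + ((x ^ 2 / 2 : ℝ) : ℂ)‖ ≤ |x| ^ 3 := by
  have := Convex.norm_image_sub_le_of_norm_hasDerivWithin_le
    (f := fun y : ℝ => Complex.exp (y * I) - 1 - y * I + ((y ^ 2 / 2 : ℝ) : ℂ))
    (f' := fun y : ℝ => Complex.exp (y * I) * I - I + (y : ℂ))
    (s := Set.uIcc 0 x) (C := x ^ 2)
    (fun y _ => by
      have h3 : HasDerivAt (fun y : ℝ => ((y ^ 2 / 2 : ℝ) : ℂ)) (y : ℂ) y := by
        have h4 : HasDerivAt (fun y : ℝ => (y ^ 2 / 2 : ℝ)) y y := by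
          simpa using ((hasDerivAt_pow 2 y).div_const 2)
        simpa using h4.ofReal_comp
      exact ((((hderexp y).sub_const 1).sub (hderlin y)).add h3).hasDerivWithinAt)
    (fun y hy => by
      show ‖Complex.exp (y * I) * I - I + (y : ℂ)‖ ≤ x ^ 2
      have he : Complex.exp (y * I) * I - I + (y : ℂ)
          = (Complex.exp (y * I) - 1 - y * I) * I := by
        linear_combination (y : ℂ) * Complex.I_sq
      rw [he, norm_mul]
      have h4 : y ^ 2 ≤ x ^ 2 := by
        have := uIcc_abs_le hy
        nlinarith [abs_nonneg x, abs_nonneg y, _root_.sq_abs x, _root_.sq_abs y]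
      simpa using (exp_taylor2 y).trans h4)
    (convex_uIcc 0 x) Set.left_mem_uIcc Set.right_mem_uIcc
  calc ‖Complex.exp (x * I) - 1 - x * I + ((x ^ 2 / 2 : ℝ) : ℂ)‖
      ≤ x ^ 2 * ‖(x : ℝ) - 0‖ := by simpa using this
    _ = |x| ^ 3 := by rw [sub_zero, Real.norm_eq_abs, ← _root_.sq_abs]; ring
open MeasureTheory intervalIntegral

noncomputable def Kf (r : ℝ) : ℝ := ∫ s in (-1:ℝ)..1, (1 - |s|) * Real.cos (s * r)

private lemma kf_cont (r : ℝ) : Continuous (fun s : ℝ => (1 - |s|) * Real.cos (s * r)) := by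
  continuity

private lemma kernel_eval (r : ℝ) :
    Kf r = if r = 0 then 1 else 2 * (1 - Real.cos r) / r ^ 2 := by
  have hint : ∀ a b : ℝ, IntervalIntegrable (fun s : ℝ => (1 - |s|) * Real.cos (s * r))
      MeasureTheory.volume a b := fun a b => (kf_cont r).intervalIntegrable a b
  have hsplit : Kf r = (∫ s in (-1:ℝ)..0, (1 - |s|) * Real.cos (s * r))
      + ∫ s in (0:ℝ)..1, (1 - |s|) * Real.cos (s * r) :=
    (integral_add_adjacent_intervals (hint (-1) 0) (hint 0 1)).symm
  have hneg : (∫ s in (-1:ℝ)..0, (1 - |s|) * Real.cos (s * r))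
      = ∫ s in (0:ℝ)..1, (1 - |s|) * Real.cos (s * r) := by
    have := intervalIntegral.integral_comp_neg (a := 0) (b := 1)
      (fun s : ℝ => (1 - |s|) * Real.cos (s * r))
    simp only [abs_neg, neg_mul, Real.cos_neg, neg_zero] at this
    rw [← this]
  have habs : (∫ s in (0:ℝ)..1, (1 - |s|) * Real.cos (s * r))
      = ∫ s in (0:ℝ)..1, (1 - s) * Real.cos (s * r) := by
    apply intervalIntegral.integral_congr
    intro s hs
    rw [Set.uIcc_of_le (by norm_num : (0:ℝ) ≤ 1)] at hs
    simp only
    rw [_root_.abs_of_nonneg hs.1]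
  rw [hsplit, hneg, habs, ← two_mul]
  by_cases hr : r = 0
  · subst hr
    simp only [mul_zero, Real.cos_zero, mul_one, if_true]
    rw [intervalIntegral.integral_sub intervalIntegrable_const
      (Continuous.intervalIntegrable (by continuity) 0 1)]
    simp [integral_id]
    norm_num
  · rw [if_neg hr]
    have hF : ∀ s ∈ Set.uIcc (0:ℝ) 1, HasDerivAt
        (fun s : ℝ => (1 - s) * (Real.sin (s * r) / r) - Real.cos (s * r) / r ^ 2)
        ((1 - s) * Real.cos (s * r)) s := by
      intro s _
      have h1 : HasDerivAt (fun s : ℝ => Real.sin (s * r)) (Real.cos (s * r) * r) s := by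
        simpa [Function.comp_def] using (Real.hasDerivAt_sin (s * r)).comp s ((hasDerivAt_id s).mul_const r)
      have h2 : HasDerivAt (fun s : ℝ => Real.cos (s * r)) (-Real.sin (s * r) * r) s := by
        simpa [Function.comp_def] using (Real.hasDerivAt_cos (s * r)).comp s ((hasDerivAt_id s).mul_const r)
      have h3 : HasDerivAt (fun s : ℝ => (1 - s) * (Real.sin (s * r) / r))
          ((-1) * (Real.sin (s * r) / r) + (1 - s) * (Real.cos (s * r) * r / r)) s := by
        simpa using (((hasDerivAt_id s).const_sub 1).fun_mul (h1.div_const r))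
      have h4 := h3.fun_sub (h2.div_const (r ^ 2))
      refine h4.congr_deriv ?_
      field_simp
      ring
    have := intervalIntegral.integral_eq_sub_of_hasDerivAt hF
      ((Continuous.intervalIntegrable (by continuity) 0 1))
    rw [this]
    simp only [one_mul, zero_mul, Real.sin_zero, Real.cos_zero, sub_self, zero_mul]
    field_simp
    ring
private lemma kernel_nonneg (r : ℝ) : 0 ≤ Kf r := by
  rw [kernel_eval]
  split_ifs with h
  · norm_num
  · have h1 := Real.cos_le_one r
    have h2 : (0:ℝ) < r ^ 2 := by positivity
    have : 0 ≤ 2 * (1 - Real.cos r) := by linarith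
    positivity

private lemma kernel_ge {r : ℝ} (hr : |r| ≤ 1) : (43:ℝ)/48 ≤ Kf r := by
  rw [kernel_eval]
  split_ifs with h
  · norm_num
  · have hb := Real.cos_bound hr
    have h1 : |r| ^ 4 ≤ r ^ 2 := by
      have h2 : r ^ 2 ≤ 1 := by nlinarith [sq_abs r, abs_nonneg r]
      nlinarith [sq_abs r, sq_nonneg r]
    have hr2 : 0 < r ^ 2 := by positivity
    rw [le_div_iff₀ hr2]
    rw [abs_le] at hb
    nlinarith [sq_abs r]

variable {Ω : Type*} [MeasurableSpace Ω] {μ : Measure Ω}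

private lemma integrable_bdd [IsFiniteMeasure μ] {E : Type*} [NormedAddCommGroup E]
    {f : Ω → E} (hf : AEStronglyMeasurable f μ) (C : ℝ) (h : ∀ ω, ‖f ω‖ ≤ C) :
    Integrable f μ :=
  Integrable.mono' (integrable_const C) hf (Filter.Eventually.of_forall h)

private lemma meas_cexpI {X : Ω → ℝ} (hX : Measurable X) :
    Measurable (fun ω => Complex.exp (X ω * I)) :=
  Complex.measurable_exp.comp ((Complex.measurable_ofReal.comp hX).mul_const I)

private lemma integral_ofReal_add_mul_I {g h : Ω → ℝ} (hg : Integrable g μ)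
    (hh : Integrable h μ) :
    ∫ ω, ((g ω : ℂ) + (h ω : ℂ) * I) ∂μ = ((∫ ω, g ω ∂μ : ℝ) : ℂ) + ((∫ ω, h ω ∂μ : ℝ) : ℂ) * I := by
  have h1 : Integrable (fun ω => ((g ω : ℝ) : ℂ)) μ := hg.ofReal
  have h2 : Integrable (fun ω => ((h ω : ℝ) : ℂ) * I) μ := hh.ofReal.mul_const I
  have e1 : ∫ ω, ((g ω : ℝ) : ℂ) ∂μ = ((∫ ω, g ω ∂μ : ℝ) : ℂ) := integral_ofReal
  have e2 : ∫ ω, ((h ω : ℝ) : ℂ) ∂μ = ((∫ ω, h ω ∂μ : ℝ) : ℂ) := integral_ofReal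
  rw [integral_add h1 h2, MeasureTheory.integral_mul_const, e1, e2]

private lemma integral_cexpI [IsProbabilityMeasure μ] {X : Ω → ℝ} (hX : Measurable X) :
    ∫ ω, Complex.exp (X ω * I) ∂μ
      = ((∫ ω, Real.cos (X ω) ∂μ : ℝ) : ℂ) + ((∫ ω, Real.sin (X ω) ∂μ : ℝ) : ℂ) * I := by
  have hexp : ∀ ω, Complex.exp (X ω * I)
      = ((Real.cos (X ω) : ℂ) + (Real.sin (X ω) : ℂ) * I) := by
    intro ω
    rw [Complex.exp_mul_I, Complex.ofReal_cos, Complex.ofReal_sin]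
  simp_rw [hexp]
  exact integral_ofReal_add_mul_I
    (integrable_bdd (Real.continuous_cos.measurable.comp hX).aestronglyMeasurable 1
      (fun ω => by simpa using Real.abs_cos_le_one (X ω)))
    (integrable_bdd (Real.continuous_sin.measurable.comp hX).aestronglyMeasurable 1
      (fun ω => by simpa using Real.abs_sin_le_one (X ω)))

private lemma indep_cexpI_mul [IsProbabilityMeasure μ] {X Y : Ω → ℝ}
    (hX : Measurable X) (hY : Measurable Y) (hXY : IndepFun X Y μ) :
    ∫ ω, Complex.exp ((X ω + Y ω) * I) ∂μ
      = (∫ ω, Complex.exp (X ω * I) ∂μ) * ∫ ω, Complex.exp (Y ω * I) ∂μ := by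
  have key : ∀ (f g : ℝ → ℝ), Measurable f → Measurable g → (∀ x, |f x| ≤ 1) → (∀ x, |g x| ≤ 1) →
      ∫ ω, f (X ω) * g (Y ω) ∂μ = (∫ ω, f (X ω) ∂μ) * ∫ ω, g (Y ω) ∂μ := by
    intro f g hf hg hbf hbg
    exact (hXY.comp hf hg).integral_fun_mul_eq_mul_integral
      ((hf.comp hX).aestronglyMeasurable) ((hg.comp hY).aestronglyMeasurable)
  have intf : ∀ (f : ℝ → ℝ) (Z : Ω → ℝ), Measurable f → Measurable Z → (∀ x, |f x| ≤ 1) →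
      Integrable (fun ω => f (Z ω)) μ := fun f Z hf hZ hb =>
    integrable_bdd ((hf.comp hZ)).aestronglyMeasurable 1 (fun ω => by simpa using hb (Z ω))
  have imul : ∀ (f g : ℝ → ℝ), Measurable f → Measurable g → (∀ x, |f x| ≤ 1) → (∀ x, |g x| ≤ 1) →
      Integrable (fun ω => f (X ω) * g (Y ω)) μ := by
    intro f g hf hg hbf hbg
    exact integrable_bdd (((hf.comp hX).mul (hg.comp hY))).aestronglyMeasurable 1 (fun ω => by
      rw [norm_mul]
      exact mul_le_one₀ (by simpa using hbf (X ω)) (norm_nonneg _) (by simpa using hbg (Y ω)))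
  have icc := imul _ _ Real.measurable_cos Real.measurable_cos
    (fun x => Real.abs_cos_le_one x) (fun x => Real.abs_cos_le_one x)
  have iss := imul _ _ Real.measurable_sin Real.measurable_sin
    (fun x => Real.abs_sin_le_one x) (fun x => Real.abs_sin_le_one x)
  have ics := imul _ _ Real.measurable_cos Real.measurable_sin
    (fun x => Real.abs_cos_le_one x) (fun x => Real.abs_sin_le_one x)
  have isc := imul _ _ Real.measurable_sin Real.measurable_cos
    (fun x => Real.abs_sin_le_one x) (fun x => Real.abs_cos_le_one x)
  have hre : Integrable (fun ω => Real.cos (X ω) * Real.cos (Y ω)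
      - Real.sin (X ω) * Real.sin (Y ω)) μ := icc.sub iss
  have him : Integrable (fun ω => Real.cos (X ω) * Real.sin (Y ω)
      + Real.sin (X ω) * Real.cos (Y ω)) μ := ics.add isc
  have hexp : ∀ ω, Complex.exp ((X ω + Y ω) * I)
      = ((Real.cos (X ω) * Real.cos (Y ω) - Real.sin (X ω) * Real.sin (Y ω) : ℝ) : ℂ)
        + ((Real.cos (X ω) * Real.sin (Y ω) + Real.sin (X ω) * Real.cos (Y ω) : ℝ) : ℂ) * I := by
    intro ω
    rw [Complex.exp_mul_I]
    push_cast
    rw [Complex.cos_add, Complex.sin_add]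
    ring
  rw [integral_cexpI hX, integral_cexpI hY]
  calc ∫ ω, Complex.exp ((X ω + Y ω) * I) ∂μ
      = ((∫ ω, (Real.cos (X ω) * Real.cos (Y ω) - Real.sin (X ω) * Real.sin (Y ω)) ∂μ : ℝ) : ℂ)
        + ((∫ ω, (Real.cos (X ω) * Real.sin (Y ω) + Real.sin (X ω) * Real.cos (Y ω)) ∂μ : ℝ) : ℂ)
          * I := by
        simp_rw [hexp]; exact integral_ofReal_add_mul_I hre him
    _ = _ := by
        have e1 := key _ _ Real.measurable_cos Real.measurable_cos
          (fun x => Real.abs_cos_le_one x) (fun x => Real.abs_cos_le_one x)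
        have e2 := key _ _ Real.measurable_sin Real.measurable_sin
          (fun x => Real.abs_sin_le_one x) (fun x => Real.abs_sin_le_one x)
        have e3 := key _ _ Real.measurable_cos Real.measurable_sin
          (fun x => Real.abs_cos_le_one x) (fun x => Real.abs_sin_le_one x)
        have e4 := key _ _ Real.measurable_sin Real.measurable_cos
          (fun x => Real.abs_sin_le_one x) (fun x => Real.abs_cos_le_one x)
        rw [integral_sub icc iss, integral_add ics isc]
        rw [key _ _ Real.measurable_cos Real.measurable_cos
            (fun x => Real.abs_cos_le_one x) (fun x => Real.abs_cos_le_one x),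
          key _ _ Real.measurable_sin Real.measurable_sin
            (fun x => Real.abs_sin_le_one x) (fun x => Real.abs_sin_le_one x),
          key _ _ Real.measurable_cos Real.measurable_sin
            (fun x => Real.abs_cos_le_one x) (fun x => Real.abs_sin_le_one x),
          key _ _ Real.measurable_sin Real.measurable_cos
            (fun x => Real.abs_sin_le_one x) (fun x => Real.abs_cos_le_one x)]
        push_cast
        linear_combination (-((∫ ω, Real.sin (X ω) ∂μ : ℝ) : ℂ))
          * ((∫ ω, Real.sin (Y ω) ∂μ : ℝ) : ℂ) * Complex.I_sq

private lemma integral_cexpI_sum [IsProbabilityMeasure μ] {m : ℕ} {ξ : Fin m → Ω → ℝ}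
    (hmeas : ∀ i, Measurable (ξ i))
    (hind : iIndepFun ξ μ) (w : ℝ)
    (s : Finset (Fin m)) :
    ∫ ω, Complex.exp (((w * ∑ i ∈ s, ξ i ω : ℝ) : ℂ) * I) ∂μ
      = ∏ i ∈ s, ∫ ω, Complex.exp (((w * ξ i ω : ℝ) : ℂ) * I) ∂μ := by
  induction s using Finset.induction_on with
  | empty => simp
  | @insert i s hi ih =>
    have hXmeas : Measurable (fun ω => w * ∑ j ∈ s, ξ j ω) :=
      (Finset.measurable_sum s (fun j _ => hmeas j)).const_mul w
    have hYmeas : Measurable (fun ω => w * ξ i ω) := (hmeas i).const_mul w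
    have hXY : IndepFun (fun ω => w * ∑ j ∈ s, ξ j ω) (fun ω => w * ξ i ω) μ := by
      have h0 : IndepFun (∑ j ∈ s, ξ j) (ξ i) μ :=
        hind.indepFun_finsetSum_of_notMem hmeas hi
      have h1 := h0.comp (measurable_const_mul w) (measurable_const_mul w)
      have h2 : ((w * ·) ∘ ∑ j ∈ s, ξ j) = (fun ω => w * ∑ j ∈ s, ξ j ω) := by
        funext ω; simp [Finset.sum_apply]
      rwa [h2] at h1
    have key := indep_cexpI_mul hXmeas hYmeas hXY
    have hrw : ∀ ω, ((w * ∑ j ∈ insert i s, ξ j ω : ℝ) : ℂ)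
        = ((w * ∑ j ∈ s, ξ j ω : ℝ) : ℂ) + ((w * ξ i ω : ℝ) : ℂ) := by
      intro ω
      rw [Finset.sum_insert hi]
      push_cast
      ring
    rw [Finset.prod_insert hi, ← ih]
    calc ∫ ω, Complex.exp (((w * ∑ j ∈ insert i s, ξ j ω : ℝ) : ℂ) * I) ∂μ
        = ∫ ω, Complex.exp ((((w * ∑ j ∈ s, ξ j ω : ℝ) : ℂ)
            + ((w * ξ i ω : ℝ) : ℂ)) * I) ∂μ := by
          congr 1; funext ω; rw [hrw ω]
      _ = (∫ ω, Complex.exp (((w * ∑ j ∈ s, ξ j ω : ℝ) : ℂ) * I) ∂μ)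
            * ∫ ω, Complex.exp (((w * ξ i ω : ℝ) : ℂ) * I) ∂μ := key
      _ = (∫ ω, Complex.exp (((w * ξ i ω : ℝ) : ℂ) * I) ∂μ)
            * ∫ ω, Complex.exp (((w * ∑ j ∈ s, ξ j ω : ℝ) : ℂ) * I) ∂μ := mul_comm _ _

private lemma abs_le_one_add_cube (x : ℝ) : |x| ≤ 1 + |x| ^ 3 := by
  rcases le_total (|x|) 1 with h | h
  · have := abs_nonneg x; nlinarith [pow_nonneg (abs_nonneg x) 3]
  · have h2 : 0 ≤ |x| * ((|x| - 1) * (|x| + 1)) :=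
      mul_nonneg (abs_nonneg x) (mul_nonneg (by linarith) (by positivity))
    nlinarith [abs_nonneg x]

private lemma sq_le_one_add_cube (x : ℝ) : x ^ 2 ≤ 1 + |x| ^ 3 := by
  rcases le_total (|x|) 1 with h | h
  · nlinarith [abs_nonneg x, sq_abs x]
  · nlinarith [abs_nonneg x, sq_abs x]

private lemma char_factor_bound [IsProbabilityMeasure μ] {X : Ω → ℝ} (hX : Measurable X)
    (hint3 : Integrable (fun ω => |X ω| ^ 3) μ) (hmean : ∫ ω, X ω ∂μ = 0)
    {w : ℝ}
    (hsmall1 : (∫ ω, X ω ^ 2 ∂μ) * w ^ 2 ≤ 1)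
    (hsmall2 : |w| ^ 3 * (∫ ω, |X ω| ^ 3 ∂μ) ≤ (∫ ω, X ω ^ 2 ∂μ) * w ^ 2 / 4) :
    ‖∫ ω, Complex.exp (((w * X ω : ℝ) : ℂ) * I) ∂μ‖
      ≤ Real.exp (-((∫ ω, X ω ^ 2 ∂μ) * w ^ 2) / 4) := by
  set V := ∫ ω, X ω ^ 2 ∂μ with hV
  have intX : Integrable X μ := by
    refine Integrable.mono' ((integrable_const 1).add hint3) hX.aestronglyMeasurable
      (Filter.Eventually.of_forall fun ω => ?_)
    simpa using abs_le_one_add_cube (X ω)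
  have intX2 : Integrable (fun ω => X ω ^ 2) μ := by
    refine Integrable.mono' ((integrable_const 1).add hint3) (hX.pow_const 2).aestronglyMeasurable
      (Filter.Eventually.of_forall fun ω => ?_)
    simpa [abs_of_nonneg (sq_nonneg (X ω))] using sq_le_one_add_cube (X ω)
  have icexp : Integrable (fun ω => Complex.exp (((w * X ω : ℝ) : ℂ) * I)) μ :=
    integrable_bdd (meas_cexpI ((hX.const_mul w))).aestronglyMeasurable 1
      (fun ω => by rw [Complex.norm_exp_ofReal_mul_I])
  have iwXI : Integrable (fun ω => ((w * X ω : ℝ) : ℂ) * I) μ :=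
    (Integrable.ofReal (intX.const_mul w)).mul_const I
  have iwX2r : Integrable (fun ω => (w * X ω) ^ 2 / 2) μ :=
    (intX2.const_mul (w ^ 2 / 2)).congr (Filter.Eventually.of_forall fun ω => by ring)
  have iwX2 : Integrable (fun ω => (((w * X ω) ^ 2 / 2 : ℝ) : ℂ)) μ := iwX2r.ofReal
  set g : Ω → ℂ := fun ω =>
    Complex.exp (((w * X ω : ℝ) : ℂ) * I) - 1 - ((w * X ω : ℝ) : ℂ) * I
      + (((w * X ω) ^ 2 / 2 : ℝ) : ℂ) with hg
  have iB : Integrable (fun ω => Complex.exp (((w * X ω : ℝ) : ℂ) * I) - 1) μ :=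
    icexp.sub (integrable_const 1)
  have iA : Integrable (fun ω =>
      Complex.exp (((w * X ω : ℝ) : ℂ) * I) - 1 - ((w * X ω : ℝ) : ℂ) * I) μ := iB.sub iwXI
  have ig : Integrable g μ := iA.add iwX2
  have hVnn : 0 ≤ V := integral_nonneg fun ω => sq_nonneg _
  -- compute ∫ g
  have e3 : ∫ ω, ((w * X ω : ℝ) : ℂ) * I ∂μ = 0 := by
    rw [MeasureTheory.integral_mul_const]
    have e1 : ∫ ω, ((w * X ω : ℝ) : ℂ) ∂μ = ((∫ ω, w * X ω ∂μ : ℝ) : ℂ) := integral_ofReal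
    rw [e1, MeasureTheory.integral_const_mul, hmean]
    simp
  have e4 : ∫ ω, (((w * X ω) ^ 2 / 2 : ℝ) : ℂ) ∂μ = ((V * w ^ 2 / 2 : ℝ) : ℂ) := by
    have e1 : ∫ ω, (((w * X ω) ^ 2 / 2 : ℝ) : ℂ) ∂μ
        = ((∫ ω, (w * X ω) ^ 2 / 2 ∂μ : ℝ) : ℂ) := integral_ofReal
    rw [e1]
    norm_cast
    calc ∫ ω, (w * X ω) ^ 2 / 2 ∂μ = ∫ ω, (w ^ 2 / 2) * X ω ^ 2 ∂μ := by
          congr 1; funext ω; ring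
      _ = (w ^ 2 / 2) * V := MeasureTheory.integral_const_mul _ _
      _ = V * w ^ 2 / 2 := by ring
  have hsplit : ∫ ω, g ω ∂μ
      = (∫ ω, Complex.exp (((w * X ω : ℝ) : ℂ) * I) ∂μ) - 1 + ((V * w ^ 2 / 2 : ℝ) : ℂ) := by
    rw [hg]
    rw [integral_add iA iwX2, integral_sub iB iwXI,
      integral_sub icexp (integrable_const 1), e3, e4]
    simp
  have hnormg : ‖∫ ω, g ω ∂μ‖ ≤ |w| ^ 3 * ∫ ω, |X ω| ^ 3 ∂μ := by
    calc ‖∫ ω, g ω ∂μ‖ ≤ ∫ ω, ‖g ω‖ ∂μ := norm_integral_le_integral_norm g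
      _ ≤ ∫ ω, |w| ^ 3 * |X ω| ^ 3 ∂μ := by
          refine integral_mono_of_nonneg (Filter.Eventually.of_forall fun ω => norm_nonneg _)
            (hint3.const_mul _) (Filter.Eventually.of_forall fun ω => ?_)
          have h := exp_taylor3 (w * X ω)
          show ‖g ω‖ ≤ |w| ^ 3 * |X ω| ^ 3
          rw [hg]
          exact le_of_le_of_eq h (by rw [abs_mul, mul_pow])
      _ = |w| ^ 3 * ∫ ω, |X ω| ^ 3 ∂μ := MeasureTheory.integral_const_mul _ _
  have hφ : ∫ ω, Complex.exp (((w * X ω : ℝ) : ℂ) * I) ∂μ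
      = ((1 - V * w ^ 2 / 2 : ℝ) : ℂ) + ∫ ω, g ω ∂μ := by
    rw [hsplit]
    push_cast
    ring
  rw [hφ]
  calc ‖((1 - V * w ^ 2 / 2 : ℝ) : ℂ) + ∫ ω, g ω ∂μ‖
      ≤ ‖((1 - V * w ^ 2 / 2 : ℝ) : ℂ)‖ + ‖∫ ω, g ω ∂μ‖ := norm_add_le _ _
    _ ≤ (1 - V * w ^ 2 / 2) + V * w ^ 2 / 4 := by
        have h1 : ‖((1 - V * w ^ 2 / 2 : ℝ) : ℂ)‖ = |1 - V * w ^ 2 / 2| := by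
          rw [Complex.norm_real, Real.norm_eq_abs]
        rw [h1, _root_.abs_of_nonneg (by nlinarith : (0:ℝ) ≤ 1 - V * w ^ 2 / 2)]
        have := hnormg.trans hsmall2
        linarith
    _ = -(V * w ^ 2) / 4 + 1 := by ring
    _ ≤ Real.exp (-(V * w ^ 2) / 4) := Real.add_one_le_exp _

set_option maxHeartbeats 1000000 in
/-- anti-concentration, Lévy concentration function bound: for every
`M > 0` there is `C = C(M) > 0` such that for independent centered real random variables
`ξ_1, …, ξ_m` with `𝔼|ξ_i|³ ≤ M (𝔼ξ_i²)^{3/2}` and `Σ 𝔼ξ_i² > 0`, the sum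
`S = ξ_1 + ⋯ + ξ_m` satisfies, for every `t ≥ (1/8) max_i √(𝔼ξ_i²)`,
`Q_S(t) = sup_a P(|S - a| ≤ t) ≤ C t / √(Σ 𝔼ξ_i²)`. -/
theorem stmt_18 (M : ℝ) (hM : 0 < M) :
    ∃ C : ℝ, 0 < C ∧
      ∀ (Ω : Type) (_ : MeasurableSpace Ω) (μ : Measure Ω), IsProbabilityMeasure μ →
        ∀ (m : ℕ) (ξ : Fin m → Ω → ℝ),
          (∀ i, Measurable (ξ i)) →
          iIndepFun ξ μ →
          (∀ i, Integrable (fun ω => |ξ i ω| ^ 3) μ) →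
          (∀ i, (∫ ω, ξ i ω ∂μ) = 0) →
          (∀ i, (∫ ω, |ξ i ω| ^ 3 ∂μ) ≤ M * (∫ ω, (ξ i ω) ^ 2 ∂μ) ^ ((3 : ℝ) / 2)) →
          (0 < ∑ i, ∫ ω, (ξ i ω) ^ 2 ∂μ) →
          ∀ t : ℝ,
            (1 / 8) * (⨆ i, Real.sqrt (∫ ω, (ξ i ω) ^ 2 ∂μ)) ≤ t →
            (⨆ a : ℝ, (μ {ω | |(∑ i, ξ i ω) - a| ≤ t}).toReal)
              ≤ C * t / Real.sqrt (∑ i, ∫ ω, (ξ i ω) ^ 2 ∂μ) := by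
  refine ⟨256 * (M + 1), by nlinarith, ?_⟩
  intro Ω mΩ μ hprob m ξ hmeas hind hint3 hmean hM3 hVpos t ht
  set V : Fin m → ℝ := fun i => ∫ ω, (ξ i ω) ^ 2 ∂μ with hVdef
  set Vtot : ℝ := ∑ i, V i with hVtotdef
  have hVnn : ∀ i, 0 ≤ V i := fun i => integral_nonneg fun ω => sq_nonneg _
  have hVtot_pos : 0 < Vtot := hVpos
  have hsV_pos : 0 < Real.sqrt Vtot := Real.sqrt_pos.2 hVtot_pos
  -- each sqrt variance is at most 8t
  have hm : Nonempty (Fin m) := by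
    by_contra h
    rw [not_nonempty_iff] at h
    rw [hVtotdef, Finset.univ_eq_empty, Finset.sum_empty] at hVtot_pos
    exact lt_irrefl 0 hVtot_pos
  have hvle : ∀ i, Real.sqrt (V i) ≤ 8 * t := by
    intro i
    have h1 : Real.sqrt (V i) ≤ ⨆ j, Real.sqrt (V j) :=
      le_ciSup (Finite.bddAbove_range (fun j => Real.sqrt (V j))) i
    linarith
  have ht_pos : 0 < t := by
    obtain ⟨i, hi⟩ : ∃ i, 0 < V i := by
      by_contra h
      push_neg at h
      have : Vtot ≤ 0 := Finset.sum_nonpos fun i _ => h i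
      linarith
    have := hvle i
    have h2 : 0 < Real.sqrt (V i) := Real.sqrt_pos.2 hi
    linarith
  set ε : ℝ := 1 / (32 * (M + 1)) with hεdef
  have hε_pos : 0 < ε := by rw [hεdef]; positivity
  have hε1 : ε ≤ 1 / 32 := by
    rw [hεdef]
    rw [div_le_div_iff₀ (by nlinarith) (by norm_num)]
    nlinarith
  set c : ℝ := ε / t with hcdef
  have hc_pos : 0 < c := div_pos hε_pos ht_pos
  have hct : c * t = ε := div_mul_cancel₀ ε (ne_of_gt ht_pos)
  set S : Ω → ℝ := fun ω => ∑ i, ξ i ω with hSdef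
  have hSmeas : Measurable S := Finset.measurable_sum _ fun i _ => hmeas i
  set β : ℝ := Vtot * c ^ 2 / 4 with hβdef
  have hβ_pos : 0 < β := by rw [hβdef]; positivity
  -- the per-factor char function bound, valid for all |w| ≤ c
  have hfactor : ∀ (w : ℝ), |w| ≤ c → ∀ i,
      ‖∫ ω, Complex.exp (((w * ξ i ω : ℝ) : ℂ) * I) ∂μ‖
        ≤ Real.exp (-(V i * w ^ 2) / 4) := by
    intro w hw i
    have hVle : V i ≤ 64 * t ^ 2 := by
      have h1 : Real.sqrt (V i) ^ 2 ≤ (8 * t) ^ 2 :=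
        pow_le_pow_left₀ (Real.sqrt_nonneg _) (hvle i) 2
      rw [Real.sq_sqrt (hVnn i)] at h1
      nlinarith [h1]
    have hw2 : w ^ 2 ≤ c ^ 2 := by nlinarith [abs_nonneg w, sq_abs w]
    have htc : t ^ 2 * c ^ 2 = ε ^ 2 := by
      have : (c * t) ^ 2 = ε ^ 2 := by rw [hct]
      nlinarith [this]
    apply char_factor_bound (hmeas i) (hint3 i) (hmean i)
    · -- V i * w ^ 2 ≤ 1
      have hA1 : V i * w ^ 2 ≤ 64 * t ^ 2 * w ^ 2 :=
        mul_le_mul_of_nonneg_right hVle (sq_nonneg w)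
      have hA2 : 64 * t ^ 2 * w ^ 2 ≤ 64 * t ^ 2 * c ^ 2 :=
        mul_le_mul_of_nonneg_left hw2 (by positivity)
      have hA3 : 64 * (t ^ 2 * c ^ 2) = 64 * ε ^ 2 := by rw [htc]
      nlinarith [hε_pos, hε1]
    · -- third moment smallness
      have hmom := hM3 i
      have hrpow : (V i) ^ ((3:ℝ)/2) = Real.sqrt (V i) ^ 3 := by
        rw [Real.sqrt_eq_rpow, ← Real.rpow_natCast ((V i) ^ ((1:ℝ)/2)) 3,
          ← Real.rpow_mul (hVnn i)]
        norm_num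
      have h3 : (∫ ω, |ξ i ω| ^ 3 ∂μ) ≤ M * Real.sqrt (V i) ^ 3 := by
        rw [← hrpow]; exact hmom
      have hint3nn : 0 ≤ ∫ ω, |ξ i ω| ^ 3 ∂μ :=
        integral_nonneg fun ω => by positivity
      have hsv_nn : 0 ≤ Real.sqrt (V i) := Real.sqrt_nonneg _
      have hwnn : 0 ≤ |w| := abs_nonneg w
      -- M * sqrt(V i) * |w| ≤ 1/4
      have hkey : M * Real.sqrt (V i) * |w| ≤ 1 / 4 := by
        have h4 : Real.sqrt (V i) * |w| ≤ (8 * t) * c :=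
          mul_le_mul (hvle i) hw (abs_nonneg w) (by nlinarith)
        have h5 : (8 * t) * c = 8 * ε := by
          rw [mul_comm (8 * t) c]; nlinarith [hct]
        have h6 : M * (Real.sqrt (V i) * |w|) ≤ M * (8 * ε) := by
          apply mul_le_mul_of_nonneg_left _ hM.le
          rw [← h5]; exact h4
        have h7 : M * (8 * ε) ≤ 1 / 4 := by
          have hM1 : (0:ℝ) < M + 1 := by linarith
          have he : M * (8 * (1 / (32 * (M + 1)))) = M / (4 * (M + 1)) := by
            field_simp; ring
          rw [hεdef, he, div_le_div_iff₀ (by linarith) (by norm_num)]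
          nlinarith
        nlinarith
      -- conclude
      have hsq : Real.sqrt (V i) ^ 2 = V i := Real.sq_sqrt (hVnn i)
      have hw2abs : |w| ^ 2 = w ^ 2 := sq_abs w
      calc |w| ^ 3 * ∫ ω, |ξ i ω| ^ 3 ∂μ
          ≤ |w| ^ 3 * (M * Real.sqrt (V i) ^ 3) := by
            apply mul_le_mul_of_nonneg_left h3 (by positivity)
        _ = (M * Real.sqrt (V i) * |w|) * ((Real.sqrt (V i) * |w|) ^ 2) := by ring
        _ ≤ (1/4) * ((Real.sqrt (V i) * |w|) ^ 2) := by
            apply mul_le_mul_of_nonneg_right hkey (by positivity)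
        _ = V i * w ^ 2 / 4 := by rw [mul_pow, hsq, hw2abs]; ring
  -- now bound the concentration for each a
  refine ciSup_le fun a => ?_
  set A : Set Ω := {ω | |S ω - a| ≤ t} with hAdef
  have hA : MeasurableSet A := measurableSet_le ((hSmeas.sub_const a).abs) measurable_const
  set ν : Measure ℝ := volume.restrict (Set.Ioc (-1 : ℝ) 1) with hνdef
  set F : Ω → ℝ → ℝ := fun ω s => (1 - |s|) * Real.cos (s * (c * (S ω - a))) with hFdef
  have hFmeas : Measurable (Function.uncurry F) := by
    apply Measurable.mul
    · exact measurable_const.sub (measurable_snd.abs)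
    · exact Real.measurable_cos.comp
        (measurable_snd.mul (((hSmeas.comp measurable_fst).sub_const a).const_mul c))
  have hFint : Integrable (Function.uncurry F) (μ.prod ν) := by
    refine Integrable.mono' (integrable_const 2) hFmeas.aestronglyMeasurable ?_
    have hle : μ.prod ν = (μ.prod volume).restrict (Set.univ ×ˢ Set.Ioc (-1:ℝ) 1) := by
      rw [hνdef, ← Measure.prod_restrict, Measure.restrict_univ]
    have hmem : ∀ᵐ p : Ω × ℝ ∂(μ.prod ν), p ∈ (Set.univ ×ˢ Set.Ioc (-1:ℝ) 1) := by
      rw [hle]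
      exact ae_restrict_mem (MeasurableSet.univ.prod measurableSet_Ioc)
    filter_upwards [hmem] with p hp
    have hs : |p.2| ≤ 1 := by
      have := hp.2
      rw [Set.mem_Ioc] at this
      rw [abs_le]; exact ⟨this.1.le, this.2⟩
    have h1 : |(1 - |p.2| : ℝ)| ≤ 1 := by
      rw [abs_le]
      constructor <;> nlinarith [abs_nonneg p.2]
    calc ‖Function.uncurry F p‖ = |(1 - |p.2| : ℝ)| * |Real.cos (p.2 * (c * (S p.1 - a)))| := by
          rw [hFdef]; simp [Function.uncurry, abs_mul]
      _ ≤ 1 * 1 := mul_le_mul h1 (Real.abs_cos_le_one _) (abs_nonneg _) (by norm_num)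
      _ ≤ 2 := by norm_num
  have hKrepr : ∀ ω, Kf (c * (S ω - a)) = ∫ s, F ω s ∂ν := by
    intro ω
    rw [Kf, intervalIntegral.integral_of_le (by norm_num : (-1:ℝ) ≤ 1), hνdef, hFdef]
  have hKint : Integrable (fun ω => Kf (c * (S ω - a))) μ := by
    have h := hFint.integral_prod_left
    refine h.congr (Filter.Eventually.of_forall fun ω => ?_)
    show (∫ s, Function.uncurry F (ω, s) ∂ν) = Kf (c * (S ω - a))
    rw [hKrepr ω]
    rfl
  -- Step A: measure bounded by kernel expectation
  have stepA : (μ A).toReal ≤ (48/43) * ∫ ω, Kf (c * (S ω - a)) ∂μ := by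
    have h0 : (μ A).toReal = ∫ ω, A.indicator (fun _ => (1:ℝ)) ω ∂μ := by
      rw [integral_indicator_const (1:ℝ) hA, smul_eq_mul, mul_one]; rfl
    rw [h0]
    have hptwise : ∀ ω, A.indicator (fun _ => (1:ℝ)) ω ≤ (48/43) * Kf (c * (S ω - a)) := by
      intro ω
      by_cases hω : ω ∈ A
      · rw [Set.indicator_of_mem hω]
        have habs : |c * (S ω - a)| ≤ 1 := by
          rw [abs_mul, abs_of_pos hc_pos]
          have h1 : |S ω - a| ≤ t := hω
          calc c * |S ω - a| ≤ c * t := mul_le_mul_of_nonneg_left h1 hc_pos.le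
            _ = ε := hct
            _ ≤ 1 := by linarith
        have := kernel_ge habs
        linarith
      · rw [Set.indicator_of_notMem hω]
        have := kernel_nonneg (c * (S ω - a))
        positivity
    exact le_trans
      (integral_mono ((integrable_const (1:ℝ)).indicator hA) (hKint.const_mul _) hptwise)
      (le_of_eq (MeasureTheory.integral_const_mul _ _))
  -- Step B: Fubini
  have stepB : ∫ ω, Kf (c * (S ω - a)) ∂μ = ∫ s, (∫ ω, F ω s ∂μ) ∂ν := by
    calc ∫ ω, Kf (c * (S ω - a)) ∂μ = ∫ ω, (∫ s, F ω s ∂ν) ∂μ := by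
          congr 1; funext ω; rw [hKrepr ω]
      _ = ∫ s, (∫ ω, F ω s ∂μ) ∂ν := integral_integral_swap hFint
  -- Step C: inner integral bound, a.e. s
  have hinner : ∀ᵐ s ∂ν, (∫ ω, F ω s ∂μ) ≤ Real.exp (-(Vtot * c ^ 2 / 4) * s ^ 2) := by
    rw [hνdef]
    filter_upwards [ae_restrict_mem measurableSet_Ioc] with s hs
    have hs1 : |s| ≤ 1 := by
      rw [Set.mem_Ioc] at hs
      rw [abs_le]; exact ⟨hs.1.le, hs.2⟩
    set w : ℝ := s * c with hwdef
    have hwc : |w| ≤ c := by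
      rw [hwdef, abs_mul, abs_of_pos hc_pos]
      nlinarith [abs_nonneg s, hc_pos]
    -- characteristic function manipulations
    set X : Ω → ℝ := fun ω => s * (c * (S ω - a)) with hXdef
    have hXmeas : Measurable X := ((hSmeas.sub_const a).const_mul c).const_mul s
    have hchar := integral_cexpI (μ := μ) hXmeas
    have hre : ∫ ω, Real.cos (X ω) ∂μ = (∫ ω, Complex.exp ((X ω : ℂ) * I) ∂μ).re := by
      rw [hchar]; simp
    have hsplit : ∀ ω, Complex.exp ((X ω : ℂ) * I)
        = Complex.exp (((-(w * a) : ℝ) : ℂ) * I) * Complex.exp (((w * S ω : ℝ) : ℂ) * I) := by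
      intro ω
      rw [← Complex.exp_add]
      congr 1
      rw [hXdef, hwdef]
      push_cast
      ring
    have hfac : ∫ ω, Complex.exp ((X ω : ℂ) * I) ∂μ
        = Complex.exp (((-(w * a) : ℝ) : ℂ) * I) * ∫ ω, Complex.exp (((w * S ω : ℝ) : ℂ) * I) ∂μ := by
      calc ∫ ω, Complex.exp ((X ω : ℂ) * I) ∂μ
          = ∫ ω, Complex.exp (((-(w * a) : ℝ) : ℂ) * I)
              * Complex.exp (((w * S ω : ℝ) : ℂ) * I) ∂μ := by
            congr 1; funext ω; rw [hsplit ω]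
        _ = _ := MeasureTheory.integral_const_mul _ _
    have hnorm : ‖∫ ω, Complex.exp ((X ω : ℂ) * I) ∂μ‖
        = ‖∫ ω, Complex.exp (((w * S ω : ℝ) : ℂ) * I) ∂μ‖ := by
      rw [hfac, norm_mul, Complex.norm_exp_ofReal_mul_I,
        one_mul]
    have hprod : ∫ ω, Complex.exp (((w * S ω : ℝ) : ℂ) * I) ∂μ
        = ∏ i, ∫ ω, Complex.exp (((w * ξ i ω : ℝ) : ℂ) * I) ∂μ := by
      rw [hSdef]
      exact integral_cexpI_sum hmeas hind w Finset.univ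
    have hprodbound : ‖∫ ω, Complex.exp (((w * S ω : ℝ) : ℂ) * I) ∂μ‖
        ≤ Real.exp (-(Vtot * w ^ 2) / 4) := by
      rw [hprod]
      calc ‖∏ i, ∫ ω, Complex.exp (((w * ξ i ω : ℝ) : ℂ) * I) ∂μ‖
          = ∏ i, ‖∫ ω, Complex.exp (((w * ξ i ω : ℝ) : ℂ) * I) ∂μ‖ := norm_prod _ _
        _ ≤ ∏ i, Real.exp (-(V i * w ^ 2) / 4) :=
            Finset.prod_le_prod (fun i _ => norm_nonneg _) (fun i _ => hfactor w hwc i)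
        _ = Real.exp (∑ i, -(V i * w ^ 2) / 4) := (Real.exp_sum _ _).symm
        _ = Real.exp (-(Vtot * w ^ 2) / 4) := by
            congr 1
            rw [hVtotdef, Finset.sum_mul, ← Finset.sum_div, ← Finset.sum_neg_distrib]
    have hEs : ∫ ω, Real.cos (X ω) ∂μ ≤ Real.exp (-(Vtot * c ^ 2 / 4) * s ^ 2) := by
      have h1 : ∫ ω, Real.cos (X ω) ∂μ ≤ ‖∫ ω, Complex.exp ((X ω : ℂ) * I) ∂μ‖ := by
        rw [hre]
        exact (Complex.re_le_norm _)
      have h2 : -(Vtot * w ^ 2) / 4 = -(Vtot * c ^ 2 / 4) * s ^ 2 := by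
        rw [hwdef]; ring
      calc ∫ ω, Real.cos (X ω) ∂μ ≤ _ := h1
        _ = ‖∫ ω, Complex.exp (((w * S ω : ℝ) : ℂ) * I) ∂μ‖ := hnorm
        _ ≤ Real.exp (-(Vtot * w ^ 2) / 4) := hprodbound
        _ = Real.exp (-(Vtot * c ^ 2 / 4) * s ^ 2) := by rw [h2]
    -- combine with the (1 - |s|) factor
    have hfacint : ∫ ω, F ω s ∂μ = (1 - |s|) * ∫ ω, Real.cos (X ω) ∂μ := by
      rw [hFdef, hXdef]
      exact MeasureTheory.integral_const_mul _ _
    rw [hfacint]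
    have hexp_nn : 0 < Real.exp (-(Vtot * c ^ 2 / 4) * s ^ 2) := Real.exp_pos _
    rcases le_or_gt (∫ ω, Real.cos (X ω) ∂μ) 0 with hneg | hpos
    · have h3 : (1 - |s|) * ∫ ω, Real.cos (X ω) ∂μ ≤ 0 :=
        mul_nonpos_of_nonneg_of_nonpos (by linarith) hneg
      linarith
    · calc (1 - |s|) * ∫ ω, Real.cos (X ω) ∂μ
          ≤ 1 * ∫ ω, Real.cos (X ω) ∂μ := by
            apply mul_le_mul_of_nonneg_right _ hpos.le
            nlinarith [abs_nonneg s]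
        _ = ∫ ω, Real.cos (X ω) ∂μ := one_mul _
        _ ≤ _ := hEs
  -- Step D: integrate the bound over s
  have hGint : Integrable (fun s => Real.exp (-(Vtot * c ^ 2 / 4) * s ^ 2)) ν := by
    rw [hνdef]
    exact (integrable_exp_neg_mul_sq (by positivity : (0:ℝ) < Vtot * c ^ 2 / 4)).restrict
  have hinnerint : Integrable (fun s => ∫ ω, F ω s ∂μ) ν := hFint.integral_prod_right
  have stepD : ∫ s, (∫ ω, F ω s ∂μ) ∂ν ≤ ∫ s, Real.exp (-(Vtot * c ^ 2 / 4) * s ^ 2) ∂ν :=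
    integral_mono_ae hinnerint hGint hinner
  have stepE : ∫ s, Real.exp (-(Vtot * c ^ 2 / 4) * s ^ 2) ∂ν
      ≤ Real.sqrt (Real.pi / (Vtot * c ^ 2 / 4)) := by
    rw [hνdef]
    calc ∫ s in Set.Ioc (-1:ℝ) 1, Real.exp (-(Vtot * c ^ 2 / 4) * s ^ 2)
        ≤ ∫ s, Real.exp (-(Vtot * c ^ 2 / 4) * s ^ 2) :=
          setIntegral_le_integral
            (integrable_exp_neg_mul_sq (by positivity : (0:ℝ) < Vtot * c ^ 2 / 4))
            (Filter.Eventually.of_forall fun s => (Real.exp_pos _).le)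
      _ = Real.sqrt (Real.pi / (Vtot * c ^ 2 / 4)) := integral_gaussian _
  -- final arithmetic
  have hchain : (μ A).toReal ≤ (48/43) * Real.sqrt (Real.pi / (Vtot * c ^ 2 / 4)) := by
    calc (μ A).toReal ≤ (48/43) * ∫ ω, Kf (c * (S ω - a)) ∂μ := stepA
      _ = (48/43) * ∫ s, (∫ ω, F ω s ∂μ) ∂ν := by rw [stepB]
      _ ≤ (48/43) * Real.sqrt (Real.pi / (Vtot * c ^ 2 / 4)) := by
          have := le_trans stepD stepE
          nlinarith
  -- simplify the sqrt
  set q : ℝ := 2 * t / (Real.sqrt Vtot * ε) with hqdef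
  have hq_pos : 0 < q := by rw [hqdef]; positivity
  have hsqeq : Real.sqrt (Real.pi / (Vtot * c ^ 2 / 4)) = q * Real.sqrt Real.pi := by
    set u : ℝ := Real.sqrt Vtot with hudef
    have hVs : u ^ 2 = Vtot := Real.sq_sqrt hVtot_pos.le
    have hne : u ≠ 0 := ne_of_gt hsV_pos
    have hεne : ε ≠ 0 := ne_of_gt hε_pos
    have htne : t ≠ 0 := ne_of_gt ht_pos
    have hq2 : q ^ 2 * (Vtot * c ^ 2 / 4) = 1 := by
      rw [hqdef, hcdef, ← hVs]
      field_simp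
      ring
    have hq2' : q ^ 2 = 1 / (Vtot * c ^ 2 / 4) := by
      rw [eq_div_iff (ne_of_gt (by positivity : (0:ℝ) < Vtot * c ^ 2 / 4))]
      exact hq2
    have harg : Real.pi / (Vtot * c ^ 2 / 4) = q ^ 2 * Real.pi := by
      rw [hq2']; ring
    rw [harg, Real.sqrt_mul (sq_nonneg q), Real.sqrt_sq hq_pos.le]
  have hsqrtpi : Real.sqrt Real.pi ≤ 2 := by
    have h1 : Real.sqrt Real.pi ≤ Real.sqrt 4 :=
      Real.sqrt_le_sqrt (by nlinarith [Real.pi_le_four])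
    rwa [show (4:ℝ) = 2 ^ 2 by norm_num, Real.sqrt_sq (by norm_num : (0:ℝ) ≤ 2)] at h1
  have hq_eq : q = 64 * (M + 1) * t / Real.sqrt Vtot := by
    have hM1 : (0:ℝ) < M + 1 := by linarith
    rw [hqdef, hεdef]
    field_simp
    ring
  have hX : 0 ≤ (M + 1) * t / Real.sqrt Vtot := by positivity
  calc (μ A).toReal ≤ (48/43) * (q * Real.sqrt Real.pi) := by rw [← hsqeq]; exact hchain
    _ ≤ (48/43) * (q * 2) := by
        apply mul_le_mul_of_nonneg_left _ (by norm_num : (0:ℝ) ≤ 48/43)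
        exact mul_le_mul_of_nonneg_left hsqrtpi hq_pos.le
    _ = (6144/43) * ((M + 1) * t / Real.sqrt Vtot) := by rw [hq_eq]; ring
    _ ≤ 256 * ((M + 1) * t / Real.sqrt Vtot) := by nlinarith [hX]
    _ = 256 * (M + 1) * t / Real.sqrt Vtot := by ring
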